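/- Let φ ∈ L²(ℝ) be such that the integer translates {φ(·-k)}_{k∈ℤ} form an orthonormal system in L²(ℝ), and let (μ_j)_{j∈ℤ} be a finitely supported sequence of real numbers satisfying ∑_{j∈ℤ} μ_j μ_{j+2l} = 2·δ_{0,l} for all l ∈ ℤ. Define ν_j = (-1)^{j+1} μ_{j-1} and ψ(t) = ∑_{j∈ℤ} ν_j φ(2t-j). Then the integer translates {ψ(·-r)}_{r∈ℤ} form an orthonormal system in L²(ℝ): ∫ ψ(t-r)·conj(ψ(t-s)) dt = δ_{r,s} for all r, s ∈ ℤ. -/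

import Mathlib

open MeasureTheory

lemma memLp_conj_aux {f : ℝ → ℂ} (hf : MemLp f 2 volume) :
    MemLp (fun t => (starRingEnd ℂ) (f t)) 2 volume := by
  refine ⟨Complex.continuous_conj.comp_aestronglyMeasurable hf.1, ?_⟩
  have : (fun t => (starRingEnd ℂ) (f t)) = (starRingEnd ℂ) ∘ f := rfl
  calc eLpNorm (fun t => (starRingEnd ℂ) (f t)) 2 volume
      = eLpNorm f 2 volume := eLpNorm_conj f 2 volume
    _ < ⊤ := hf.2

/-- If the integer translates of `φ ∈ L²(ℝ)` are orthonormal and the finitely supported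
real coefficients `(μ_j)` satisfy `∑_j μ_j μ_{j+2l} = 2δ_{0,l}`, then the integer
translates of the wavelet `ψ(t) = ∑_j ν_j φ(2t-j)`, `ν_j = (-1)^{j+1} μ_{j-1}`, form an
orthonormal system in `L²(ℝ)`. -/
theorem stmt_16 (φ : ℝ → ℂ) (hφL2 : MemLp φ 2 volume)
    (hφon : ∀ r s : ℤ,
      (∫ t : ℝ, φ (t - r) * (starRingEnd ℂ) (φ (t - s))) = if r = s then 1 else 0)
    (μc : ℤ → ℝ) (hfin : (Function.support μc).Finite)
    (horth : ∀ l : ℤ, (∑' j : ℤ, μc j * μc (j + 2 * l)) = 2 * (if l = 0 then 1 else 0))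
    (ν : ℤ → ℝ) (hν : ∀ j : ℤ, ν j = (-1 : ℝ) ^ (j + 1) * μc (j - 1))
    (ψ : ℝ → ℂ) (hψ : ∀ t : ℝ, ψ t = ∑' j : ℤ, (ν j : ℂ) * φ (2 * t - j)) :
    ∀ r s : ℤ,
      (∫ t : ℝ, ψ (t - r) * (starRingEnd ℂ) (ψ (t - s))) = if r = s then 1 else 0 := by
  -- ν has finite support
  have hνfin : (Function.support ν).Finite := by
    apply (hfin.image (fun j => j + 1)).subset
    intro j hj
    refine ⟨j - 1, ?_, by ring⟩
    intro h
    exact hj (by rw [hν, h, mul_zero])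
  set F : Finset ℤ := hνfin.toFinset with hF
  have hFzero : ∀ j : ℤ, j ∉ F → ν j = 0 := by
    intro j hj
    by_contra h
    exact hj (hνfin.mem_toFinset.2 h)
  -- MemLp of scaled translates
  have hmem : ∀ c : ℝ, MemLp (fun t : ℝ => φ (2 * t - c)) 2 volume := by
    intro c
    have hmap : Measure.map (fun t : ℝ => 2 * t - c) volume
        = ENNReal.ofReal |((2 : ℝ))⁻¹| • volume := by
      have hco : (fun t : ℝ => 2 * t - c) = (fun x : ℝ => x + (-c)) ∘ (fun t : ℝ => 2 * t) := by
        funext t; simp [sub_eq_add_neg]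
      rw [hco, ← Measure.map_map (by fun_prop) (by fun_prop),
        Real.map_volume_mul_left (two_ne_zero), Measure.map_smul,
        map_add_right_eq_self volume (-c)]
    have h2 : MemLp φ 2 (Measure.map (fun t : ℝ => 2 * t - c) volume) := by
      rw [hmap]
      exact hφL2.smul_measure ENNReal.ofReal_ne_top
    exact h2.comp_of_map (by fun_prop)
  -- integrability of products
  have hint : ∀ c d : ℝ,
      Integrable (fun t : ℝ => φ (2 * t - c) * (starRingEnd ℂ) (φ (2 * t - d))) volume := by
    intro c d
    have h1 := hmem c
    have h2 := memLp_conj_aux (hmem d)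
    have h3 : MemLp ((fun t : ℝ => φ (2 * t - c)) •
        (fun t : ℝ => (starRingEnd ℂ) (φ (2 * t - d)))) 1 volume :=
      MemLp.smul h2 h1
    rw [memLp_one_iff_integrable] at h3
    simpa [Pi.smul_apply, smul_eq_mul, Pi.mul_def] using h3
  -- value of basic integrals
  have hval : ∀ a b : ℤ, (∫ t : ℝ, φ (2 * t - (a : ℝ)) * (starRingEnd ℂ) (φ (2 * t - (b : ℝ))))
      = ((1 : ℝ) / 2 : ℝ) • (if a = b then (1 : ℂ) else 0) := by
    intro a b
    have h := MeasureTheory.Measure.integral_comp_mul_left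
      (fun u : ℝ => φ (u - (a : ℝ)) * (starRingEnd ℂ) (φ (u - (b : ℝ)))) 2
    rw [show (∫ t : ℝ, φ (2 * t - (a : ℝ)) * (starRingEnd ℂ) (φ (2 * t - (b : ℝ))))
        = ∫ x : ℝ, (fun u : ℝ => φ (u - (a : ℝ)) * (starRingEnd ℂ) (φ (u - (b : ℝ)))) (2 * x)
        from rfl, h, hφon a b]
    norm_num [abs_of_pos]
  -- expansion of ψ translates
  have hψr : ∀ (r : ℤ) (t : ℝ),
      ψ (t - r) = ∑ j ∈ F, (ν j : ℂ) * φ (2 * t - ((2 * r + j : ℤ) : ℝ)) := by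
    intro r t
    rw [hψ]
    rw [tsum_eq_sum (s := F) (fun j hj => by rw [hFzero j hj]; simp)]
    refine Finset.sum_congr rfl fun j hj => ?_
    congr 2
    push_cast
    ring
  intro r s
  -- rewrite the integrand as a double sum
  have key : (∫ t : ℝ, ψ (t - r) * (starRingEnd ℂ) (ψ (t - s)))
      = ∑ j ∈ F, ∑ k ∈ F, ((ν j : ℂ) * (ν k : ℂ)) *
        ∫ t : ℝ, φ (2 * t - ((2 * r + j : ℤ) : ℝ)) *
          (starRingEnd ℂ) (φ (2 * t - ((2 * s + k : ℤ) : ℝ))) := by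
    have hexp : ∀ t : ℝ, ψ (t - r) * (starRingEnd ℂ) (ψ (t - s))
        = ∑ j ∈ F, ∑ k ∈ F, ((ν j : ℂ) * (ν k : ℂ)) *
          (φ (2 * t - ((2 * r + j : ℤ) : ℝ)) *
            (starRingEnd ℂ) (φ (2 * t - ((2 * s + k : ℤ) : ℝ)))) := by
      intro t
      rw [hψr r t, hψr s t, map_sum, Finset.sum_mul_sum]
      refine Finset.sum_congr rfl fun j hj => Finset.sum_congr rfl fun k hk => ?_
      rw [map_mul, Complex.conj_ofReal]
      ring
    rw [MeasureTheory.integral_congr_ae (Filter.Eventually.of_forall hexp)]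
    rw [MeasureTheory.integral_finset_sum F (fun j hj =>
      integrable_finset_sum F (fun k hk => ((hint _ _).const_mul _)))]
    refine Finset.sum_congr rfl fun j hj => ?_
    rw [MeasureTheory.integral_finset_sum F (fun k hk => ((hint _ _).const_mul _))]
    exact Finset.sum_congr rfl fun k hk => integral_const_mul _ _
  rw [key]
  -- compute the double sum
  have hred : ∀ j ∈ F, (∑ k ∈ F, ((ν j : ℂ) * (ν k : ℂ)) *
      (((1 : ℝ) / 2 : ℝ) • (if (2 * r + j : ℤ) = (2 * s + k : ℤ) then (1 : ℂ) else 0)))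
      = ((ν j * ν (j + 2 * (r - s)) * (1 / 2) : ℝ) : ℂ) := by
    intro j hj
    have hcong : ∀ k ∈ F, ((ν j : ℂ) * (ν k : ℂ)) *
        (((1 : ℝ) / 2 : ℝ) • (if (2 * r + j : ℤ) = (2 * s + k : ℤ) then (1 : ℂ) else 0))
        = if k = j + 2 * (r - s) then ((ν j * ν k * (1 / 2) : ℝ) : ℂ) else 0 := by
      intro k hk
      have : ((2 * r + j : ℤ) = (2 * s + k : ℤ)) ↔ (k = j + 2 * (r - s)) := by omega
      simp only [this]
      split_ifs with h
      · push_cast [Complex.real_smul]; ring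
      · simp
    rw [Finset.sum_congr rfl hcong, Finset.sum_ite_eq' F (j + 2 * (r - s))
      (fun k => ((ν j * ν k * (1 / 2) : ℝ) : ℂ))]
    by_cases hmem2 : j + 2 * (r - s) ∈ F
    · simp [hmem2]
    · rw [if_neg hmem2, hFzero _ hmem2]
      push_cast
      ring
  have hsum : (∑ j ∈ F, ∑ k ∈ F, ((ν j : ℂ) * (ν k : ℂ)) *
      ∫ t : ℝ, φ (2 * t - ((2 * r + j : ℤ) : ℝ)) *
        (starRingEnd ℂ) (φ (2 * t - ((2 * s + k : ℤ) : ℝ))))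
      = ((∑ j ∈ F, ν j * ν (j + 2 * (r - s)) * (1 / 2) : ℝ) : ℂ) := by
    rw [Finset.sum_congr rfl (fun j hj => Finset.sum_congr rfl
      (fun k hk => by rw [hval (2 * r + j) (2 * s + k)]))]
    rw [Finset.sum_congr rfl hred]
    push_cast
    ring
  rw [hsum]
  -- the real identity
  set l : ℤ := r - s with hl
  have hνν : ∀ j : ℤ, ν j * ν (j + 2 * l) = μc (j - 1) * μc (j - 1 + 2 * l) := by
    intro j
    rw [hν j, hν (j + 2 * l)]
    have h1 : ((-1 : ℝ) ^ (j + 1)) * ((-1 : ℝ) ^ (j + 2 * l + 1)) = 1 := by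
      rw [← zpow_add₀ (by norm_num : (-1 : ℝ) ≠ 0),
        show (j + 1) + (j + 2 * l + 1) = 2 * (j + l + 1) by ring, zpow_mul]
      norm_num
    have h2 : (j + 2 * l - 1 : ℤ) = j - 1 + 2 * l := by ring
    rw [h2]
    calc (-1 : ℝ) ^ (j + 1) * μc (j - 1) * ((-1 : ℝ) ^ (j + 2 * l + 1) * μc (j - 1 + 2 * l))
        = ((-1 : ℝ) ^ (j + 1) * (-1 : ℝ) ^ (j + 2 * l + 1)) * (μc (j - 1) * μc (j - 1 + 2 * l)) := by
          ring
      _ = μc (j - 1) * μc (j - 1 + 2 * l) := by rw [h1, one_mul]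
  have hshift : (∑ j ∈ F, ν j * ν (j + 2 * l)) = ∑' j : ℤ, μc j * μc (j + 2 * l) := by
    rw [Finset.sum_congr rfl (fun j _ => hνν j)]
    rw [show (∑ j ∈ F, μc (j - 1) * μc (j - 1 + 2 * l))
        = ∑ j ∈ F.image (fun j => j - 1), μc j * μc (j + 2 * l) from ?_]
    · rw [tsum_eq_sum (s := F.image (fun j => j - 1))]
      intro j hj
      have hμ : μc j = 0 := by
        by_contra h
        apply hj
        rw [Finset.mem_image]
        refine ⟨j + 1, ?_, by ring⟩
        apply hνfin.mem_toFinset.2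
        rw [Function.mem_support, hν]
        have : (j + 1 - 1 : ℤ) = j := by ring
        rw [this]
        intro hc
        rcases mul_eq_zero.1 hc with h1 | h2
        · exact (zpow_ne_zero _ (by norm_num : (-1 : ℝ) ≠ 0)) h1
        · exact h h2
      rw [hμ, zero_mul]
    · rw [Finset.sum_image (by intro a _ b _ h; simp only at h; omega)]
  rw [show (∑ j ∈ F, ν j * ν (j + 2 * l) * (1 / 2))
      = (∑ j ∈ F, ν j * ν (j + 2 * l)) * (1 / 2) from (Finset.sum_mul ..).symm,
    hshift, horth l]
  have : (l = 0) ↔ (r = s) := by omega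
  simp only [this]
  split_ifs with h <;> norm_num
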